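/- Let Ψ : ℝ → ℝ and define μ_k = E_{x∼{±1}^d}[(∏_{i=1}^k x_i)·Ψ(d^{-1}Σ_{i=1}^d x_i)] for 0 ≤ k ≤ d. Then μ_k can be written as μ_k = 2^{-d} Σ_{x∈{±1}^d} (∏_{i≤k} x_i) Ψ(d^{-1}Σ_i x_i), and if Ψ has an everywhere-convergent power series expansion Ψ(t) = Σ_{n≥0} a_n t^n with all a_n ≥ 0, then the even-indexed eigenvalues are non-increasing: μ_0 ≥ μ_2 ≥ μ_4 ≥ …, and the odd-indexed eigenvalues are non-increasing: μ_1 ≥ μ_3 ≥ μ_5 ≥ …. -/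

import Mathlib

open Finset
open scoped Classical

noncomputable def val {d : ℕ} (x : Fin d → Bool) (i : Fin d) : ℝ :=
  if x i then 1 else -1

noncomputable def chi {d : ℕ} (U : Finset (Fin d)) (x : Fin d → Bool) : ℝ :=
  ∏ i ∈ U, val x i

noncomputable def fhat {d : ℕ} (f : (Fin d → Bool) → ℝ) (U : Finset (Fin d)) : ℝ :=
  (∑ x : Fin d → Bool, f x * chi U x) / 2 ^ d

def flip' {d : ℕ} (x : Fin d → Bool) (i : Fin d) : Fin d → Bool :=
  Function.update x i (!x i)

noncomputable def avgSens {d : ℕ} (f : (Fin d → Bool) → ℝ) : ℝ :=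
  (∑ x : Fin d → Bool, ∑ i : Fin d,
    if f x ≠ f (flip' x i) then (1 : ℝ) else 0) / 2 ^ d


/-- `μ_k = E_{x∼{±1}^d}[(∏_{i<k} x_i)·Ψ(d⁻¹Σ_i x_i)]`. -/
noncomputable def mu (d : ℕ) (Ψ : ℝ → ℝ) (k : ℕ) : ℝ :=
  (∑ x : Fin d → Bool,
    (∏ i ∈ Finset.univ.filter (fun i : Fin d => (i : ℕ) < k), val x i)
      * Ψ ((d : ℝ)⁻¹ * ∑ i : Fin d, val x i)) / 2 ^ d

set_option maxHeartbeats 1000000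

namespace SSB

noncomputable def vb (b : Bool) : ℝ := if b then 1 else -1

noncomputable def ind {d : ℕ} (U : Finset (Fin d)) (i : Fin d) : ℕ :=
  if i ∈ U then 1 else 0

noncomputable def ex {d n : ℕ} (f : Fin n → Fin d) (i : Fin d) : ℕ :=
  (Finset.univ.filter (fun j => f j = i)).card

noncomputable def W {d n : ℕ} (f : Fin n → Fin d) (U : Finset (Fin d)) : ℝ :=
  ∏ i : Fin d, ∑ b : Bool, vb b ^ (ex f i + ind U i)

noncomputable def hitS {d n : ℕ} (j1 j2 : Fin d) (f : Fin n → Fin d) : Finset (Fin n) :=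
  Finset.univ.filter (fun j => f j = j1 ∨ f j = j2)

noncomputable def other {d : ℕ} (j1 j2 a : Fin d) : Fin d := if a = j1 then j2 else j1

noncomputable def sig {d n : ℕ} (j1 j2 : Fin d) (f : Fin n → Fin d) : Fin n → Fin d :=
  if h : (hitS j1 j2 f).Nonempty then
    Function.update f ((hitS j1 j2 f).min' h) (other j1 j2 (f ((hitS j1 j2 f).min' h)))
  else f

lemma sum_vb_pow (m : ℕ) : ∑ b : Bool, vb b ^ m = if Even m then 2 else 0 := by
  rcases Nat.even_or_odd m with h | h
  · simp [vb, h.neg_one_pow, h]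
  · simp [vb, h.neg_one_pow, Nat.not_even_iff_odd.mpr h]

lemma sum_vb_pow_nonneg (m : ℕ) : 0 ≤ ∑ b : Bool, vb b ^ m := by
  rw [sum_vb_pow]; split <;> norm_num

lemma W_nonneg {d n : ℕ} (f : Fin n → Fin d) (U : Finset (Fin d)) : 0 ≤ W f U :=
  Finset.prod_nonneg fun _ _ => sum_vb_pow_nonneg _

lemma expand {d n : ℕ} (U : Finset (Fin d)) (f : Fin n → Fin d) :
    ∑ x : Fin d → Bool, chi U x * ∏ j, val x (f j) = W f U := by
  have h1 : ∀ x : Fin d → Bool, chi U x * ∏ j, val x (f j)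
      = ∏ i : Fin d, vb (x i) ^ (ex f i + ind U i) := by
    intro x
    have hv : ∀ i, val x i = vb (x i) := fun i => rfl
    have hchi : chi U x = ∏ i : Fin d, vb (x i) ^ ind U i := by
      rw [chi]
      rw [show (U : Finset (Fin d)) = Finset.univ.filter (· ∈ U) by simp]
      rw [Finset.prod_filter]
      exact Finset.prod_congr rfl fun i _ => by by_cases h : i ∈ U <;> simp [h, ind, hv]
    have hprod : (∏ j, val x (f j)) = ∏ i : Fin d, vb (x i) ^ ex f i := by
      rw [← Finset.prod_fiberwise' Finset.univ f (fun i => val x i)]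
      exact Finset.prod_congr rfl fun i _ => by
        rw [Finset.prod_const, ex, hv]
    rw [hchi, hprod, ← Finset.prod_mul_distrib]
    exact Finset.prod_congr rfl fun i _ => by rw [← pow_add, Nat.add_comm]
  calc ∑ x : Fin d → Bool, chi U x * ∏ j, val x (f j)
      = ∑ x : Fin d → Bool, ∏ i : Fin d, vb (x i) ^ (ex f i + ind U i) :=
        Finset.sum_congr rfl fun x _ => h1 x
    _ = ∏ i : Fin d, ∑ b : Bool, vb b ^ (ex f i + ind U i) := by
        rw [Fintype.prod_sum]
    _ = W f U := rfl

lemma sumA {d : ℕ} (U : Finset (Fin d)) (n : ℕ) :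
    ∑ x : Fin d → Bool, chi U x * (∑ i : Fin d, val x i) ^ n
      = ∑ f : Fin n → Fin d, W f U := by
  have h : ∀ x : Fin d → Bool, chi U x * (∑ i : Fin d, val x i) ^ n
      = ∑ f : Fin n → Fin d, chi U x * ∏ j, val x (f j) := by
    intro x
    rw [Fintype.sum_pow, Finset.mul_sum]
  rw [Finset.sum_congr rfl fun x _ => h x, Finset.sum_comm]
  exact Finset.sum_congr rfl fun f _ => expand U f

lemma ex_update {d n : ℕ} (f : Fin n → Fin d) (p : Fin n) (b i : Fin d) :
    ex (Function.update f p b) i + (if f p = i then 1 else 0)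
      = ex f i + (if b = i then 1 else 0) := by
  have h : ∀ (g : Fin n → Fin d), ex g i = ∑ j : Fin n, (if g j = i then 1 else 0) := by
    intro g; rw [ex, Finset.card_filter]
  rw [h, h]
  rw [← Finset.add_sum_erase _ _ (Finset.mem_univ p),
      ← Finset.add_sum_erase _ (fun j => if f j = i then 1 else 0) (Finset.mem_univ p)]
  have : ∑ j ∈ Finset.univ.erase p, (if Function.update f p b j = i then 1 else 0)
      = ∑ j ∈ Finset.univ.erase p, (if f j = i then (1:ℕ) else 0) := by
    refine Finset.sum_congr rfl fun j hj => ?_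
    rw [Function.update_of_ne (Finset.mem_erase.mp hj).1]
  rw [this, Function.update_self]
  ring

lemma key2 {d n : ℕ} (U : Finset (Fin d)) (j1 j2 : Fin d) (h12 : j1 ≠ j2)
    (h1 : j1 ∉ U) (h2 : j2 ∉ U) :
    ∑ f : Fin n → Fin d, W f (insert j1 (insert j2 U))
      ≤ ∑ f : Fin n → Fin d, W f U := by
  set U' : Finset (Fin d) := insert j1 (insert j2 U) with hU'
  set s : Finset (Fin n → Fin d) :=
    Finset.univ.filter (fun f => (hitS j1 j2 f).Nonempty) with hs
  have hvanish : ∀ f : Fin n → Fin d, f ∉ s → W f U' = 0 := by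
    intro f hf
    have hne : ∀ j, ¬(f j = j1 ∨ f j = j2) := by
      intro j hj
      exact hf (Finset.mem_filter.mpr ⟨Finset.mem_univ f,
        ⟨j, Finset.mem_filter.mpr ⟨Finset.mem_univ j, hj⟩⟩⟩)
    have hex : ex f j1 = 0 := by
      rw [ex, Finset.card_eq_zero, Finset.filter_eq_empty_iff]
      exact fun j _ h => hne j (Or.inl h)
    have hind : ind U' j1 = 1 := by simp [ind, hU']
    refine Finset.prod_eq_zero (Finset.mem_univ j1) ?_
    rw [hex, hind, sum_vb_pow, if_neg (by decide)]
  have hstep : ∀ f ∈ s, sig j1 j2 f ∈ s ∧ sig j1 j2 (sig j1 j2 f) = f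
      ∧ W (sig j1 j2 f) U = W f U' := by
    intro f hf
    have hne : (hitS j1 j2 f).Nonempty := (Finset.mem_filter.mp hf).2
    set p := (hitS j1 j2 f).min' hne with hp
    have hpmem : p ∈ hitS j1 j2 f := (hitS j1 j2 f).min'_mem hne
    have hpa : f p = j1 ∨ f p = j2 := (Finset.mem_filter.mp hpmem).2
    have hab : (f p = j1 ∧ other j1 j2 (f p) = j2) ∨ (f p = j2 ∧ other j1 j2 (f p) = j1) := by
      rcases hpa with h | h
      · exact Or.inl ⟨h, by rw [other, if_pos h]⟩
      · have hfp1 : ¬ f p = j1 := by rw [h]; exact Ne.symm h12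
        exact Or.inr ⟨h, by rw [other, if_neg hfp1]⟩
    set b := other j1 j2 (f p) with hbdef
    have hσf : sig j1 j2 f = Function.update f p b := by
      rw [sig]; simp only [dif_pos hne]; rfl
    have hσfp : sig j1 j2 f p = b := by rw [hσf, Function.update_self]
    have hbj : b = j1 ∨ b = j2 := by
      rcases hab with ⟨_, h⟩ | ⟨_, h⟩
      · exact Or.inr h
      · exact Or.inl h
    have hhitσ : hitS j1 j2 (sig j1 j2 f) = hitS j1 j2 f := by
      ext j
      by_cases hjp : j = p
      · subst hjp
        simp only [hitS, Finset.mem_filter, Finset.mem_univ, true_and]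
        constructor
        · intro _; exact hpa
        · intro _; rw [hσfp]; exact hbj
      · simp only [hitS, Finset.mem_filter, Finset.mem_univ, true_and]
        rw [hσf, Function.update_of_ne hjp]
    have hσs : sig j1 j2 f ∈ s := by
      rw [hs, Finset.mem_filter, hhitσ]
      exact ⟨Finset.mem_univ _, hne⟩
    refine ⟨hσs, ?_, ?_⟩
    · -- involution
      have hne' : (hitS j1 j2 (sig j1 j2 f)).Nonempty := by rw [hhitσ]; exact hne
      have hminσ : (hitS j1 j2 (sig j1 j2 f)).min' hne' = p := by
        rw [hp]; congr 1
      have hrw : sig j1 j2 (sig j1 j2 f)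
          = Function.update (sig j1 j2 f) p (other j1 j2 (sig j1 j2 f p)) := by
        rw [sig, dif_pos hne']
        rw [hminσ]
      rw [hrw, hσfp]
      have hob : other j1 j2 b = f p := by
        rcases hab with ⟨ha', hb'⟩ | ⟨ha', hb'⟩
        · rw [hb', other, if_neg (Ne.symm h12), ha']
        · rw [hb', other, if_pos rfl, ha']
      rw [hob, hσf, Function.update_idem, Function.update_eq_self]
    · -- W equality
      have hparity : ∀ i : Fin d,
          (Even (ex (sig j1 j2 f) i + ind U i) ↔ Even (ex f i + ind U' i)) := by
        intro i
        have e1 : ex (sig j1 j2 f) i + (if f p = i then 1 else 0)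
            = ex f i + (if b = i then 1 else 0) := by
          rw [hσf]; exact ex_update f p b i
        have hAB : (if f p = i then (1:ℕ) else 0) + (if b = i then 1 else 0)
            = (if j1 = i then 1 else 0) + (if j2 = i then 1 else 0) := by
          rcases hab with ⟨ha', hb'⟩ | ⟨ha', hb'⟩
          · rw [ha', hb']
          · rw [ha', hb', add_comm]
        have hind : ind U' i = ind U i + ((if j1 = i then 1 else 0) + (if j2 = i then 1 else 0)) := by
          by_cases hi1 : j1 = i
          · subst hi1
            rw [if_pos rfl, if_neg (fun h => h12 h.symm)]
            rw [ind, ind, if_pos (by simp [hU']), if_neg h1]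
          · by_cases hi2 : j2 = i
            · subst hi2
              rw [if_neg hi1, if_pos rfl]
              rw [ind, ind, if_pos (by simp [hU']), if_neg h2]
            · rw [if_neg hi1, if_neg hi2]
              have hiff : i ∈ U' ↔ i ∈ U := by
                simp only [hU', Finset.mem_insert]
                constructor
                · rintro (h | h | h)
                  · exact absurd h.symm hi1
                  · exact absurd h.symm hi2
                  · exact h
                · exact fun h => Or.inr (Or.inr h)
              rw [ind, ind]
              by_cases hiU : i ∈ U
              · rw [if_pos (hiff.mpr hiU), if_pos hiU]
              · rw [if_neg (fun h => hiU (hiff.mp h)), if_neg hiU]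
        rw [Nat.even_iff, Nat.even_iff]
        omega
      rw [W, W]
      refine Finset.prod_congr rfl fun i _ => ?_
      rw [sum_vb_pow, sum_vb_pow, if_congr (hparity i) rfl rfl]
  have h0 : ∑ f : Fin n → Fin d, W f U' = ∑ f ∈ s, W f U' :=
    (Finset.sum_subset (Finset.subset_univ s) (fun f _ hf => hvanish f hf)).symm
  have hinj : ∀ x ∈ s, ∀ y ∈ s, sig j1 j2 x = sig j1 j2 y → x = y := by
    intro x hx y hy hxy
    have hx' := (hstep x hx).2.1
    rw [hxy, (hstep y hy).2.1] at hx'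
    exact hx'.symm
  calc ∑ f : Fin n → Fin d, W f U' = ∑ f ∈ s, W f U' := h0
    _ = ∑ f ∈ s, W (sig j1 j2 f) U :=
        Finset.sum_congr rfl fun f hf => ((hstep f hf).2.2).symm
    _ = ∑ g ∈ s.image (sig j1 j2), W g U := (Finset.sum_image (f := fun g => W g U) hinj).symm
    _ ≤ ∑ g : Fin n → Fin d, W g U :=
        Finset.sum_le_sum_of_subset_of_nonneg (Finset.subset_univ _)
          (fun g _ _ => W_nonneg g U)

lemma hasSumExp {d : ℕ} (Ψ : ℝ → ℝ) (a : ℕ → ℝ)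
    (hΨ : ∀ t : ℝ, HasSum (fun n : ℕ => a n * t ^ n) (Ψ t))
    (c : ℝ) (U : Finset (Fin d)) :
    HasSum (fun n : ℕ => a n * c ^ n
        * ∑ x : Fin d → Bool, chi U x * (∑ i : Fin d, val x i) ^ n)
      (∑ x : Fin d → Bool, chi U x * Ψ (c * ∑ i : Fin d, val x i)) := by
  have hx : ∀ x : Fin d → Bool,
      HasSum (fun n : ℕ => chi U x * (a n * (c * ∑ i : Fin d, val x i) ^ n))
        (chi U x * Ψ (c * ∑ i : Fin d, val x i)) :=
    fun x => (hΨ _).mul_left _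
  have h := hasSum_sum (s := (Finset.univ : Finset (Fin d → Bool)))
      (fun x _ => hx x)
  have hfun : (fun n : ℕ => ∑ x : Fin d → Bool,
        chi U x * (a n * (c * ∑ i : Fin d, val x i) ^ n))
      = fun n : ℕ => a n * c ^ n
          * ∑ x : Fin d → Bool, chi U x * (∑ i : Fin d, val x i) ^ n := by
    funext n
    rw [Finset.mul_sum]
    refine Finset.sum_congr rfl fun x _ => ?_
    rw [mul_pow]; ring
  exact hfun ▸ h

lemma mu_step (d : ℕ) (Ψ : ℝ → ℝ) (a : ℕ → ℝ) (ha : ∀ n, 0 ≤ a n)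
    (hΨ : ∀ t : ℝ, HasSum (fun n : ℕ => a n * t ^ n) (Ψ t))
    (m : ℕ) (hm : m + 2 ≤ d) :
    mu d Ψ (m + 2) ≤ mu d Ψ m := by
  set U : Finset (Fin d) := Finset.univ.filter (fun i : Fin d => (i : ℕ) < m) with hU
  set j1 : Fin d := ⟨m, by omega⟩ with hj1
  set j2 : Fin d := ⟨m + 1, by omega⟩ with hj2
  have h12 : j1 ≠ j2 := by simp [hj1, hj2, Fin.ext_iff]
  have h1 : j1 ∉ U := by simp [hU, hj1]
  have h2 : j2 ∉ U := by simp [hU, hj2]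
  have hU2 : Finset.univ.filter (fun i : Fin d => (i : ℕ) < m + 2)
      = insert j1 (insert j2 U) := by
    ext i
    simp only [Finset.mem_filter, Finset.mem_univ, true_and, Finset.mem_insert,
      hU, hj1, hj2, Fin.ext_iff]
    omega
  have hc : (0:ℝ) ≤ (d : ℝ)⁻¹ := by positivity
  have hterm : ∀ n : ℕ,
      a n * ((d:ℝ)⁻¹) ^ n
        * ∑ x : Fin d → Bool, chi (insert j1 (insert j2 U)) x * (∑ i : Fin d, val x i) ^ n
      ≤ a n * ((d:ℝ)⁻¹) ^ n
        * ∑ x : Fin d → Bool, chi U x * (∑ i : Fin d, val x i) ^ n := by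
    intro n
    refine mul_le_mul_of_nonneg_left ?_ (mul_nonneg (ha n) (pow_nonneg hc n))
    rw [sumA, sumA]
    exact key2 U j1 j2 h12 h1 h2
  have hle := hasSum_le hterm
    (hasSumExp Ψ a hΨ ((d:ℝ)⁻¹) (insert j1 (insert j2 U)))
    (hasSumExp Ψ a hΨ ((d:ℝ)⁻¹) U)
  have hmu : ∀ k : ℕ, mu d Ψ k = (∑ x : Fin d → Bool,
      chi (Finset.univ.filter (fun i : Fin d => (i : ℕ) < k)) x
        * Ψ ((d : ℝ)⁻¹ * ∑ i : Fin d, val x i)) / 2 ^ d := fun k => rfl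
  rw [hmu, hmu, hU2]
  have hpos : (0:ℝ) < 2 ^ d := by positivity
  exact (div_le_div_iff_of_pos_right hpos).mpr hle

end SSB

/-- Weak spectral simplicity bias: `μ_k` is the average
`2^{-d} Σ_x (∏_{i<k} x_i) Ψ(d⁻¹Σ_i x_i)`, and if `Ψ` has an everywhere
convergent power series with nonnegative coefficients, the eigenvalues are
non-increasing separately along even and odd degrees. -/
theorem weak_spectral_simplicity_bias (d : ℕ) (hd : 0 < d)
    (Ψ : ℝ → ℝ) (a : ℕ → ℝ) (ha : ∀ n, 0 ≤ a n)
    (hΨ : ∀ t : ℝ, HasSum (fun n : ℕ => a n * t ^ n) (Ψ t)) :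
    (∀ k : ℕ, mu d Ψ k
        = 2 ^ (-(d : ℤ)) * ∑ x : Fin d → Bool,
            (∏ i ∈ Finset.univ.filter (fun i : Fin d => (i : ℕ) < k), val x i)
              * Ψ ((d : ℝ)⁻¹ * ∑ i : Fin d, val x i)) ∧
    (∀ k : ℕ, 2 * k + 2 ≤ d → mu d Ψ (2 * k + 2) ≤ mu d Ψ (2 * k)) ∧
    (∀ k : ℕ, 2 * k + 3 ≤ d → mu d Ψ (2 * k + 3) ≤ mu d Ψ (2 * k + 1)) := by
  refine ⟨?_, ?_, ?_⟩
  · intro k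
    rw [mu, div_eq_mul_inv, zpow_neg, zpow_natCast]
    exact mul_comm _ _
  · intro k hk
    exact SSB.mu_step d Ψ a ha hΨ (2 * k) hk
  · intro k hk
    have h := SSB.mu_step d Ψ a ha hΨ (2 * k + 1) (by omega)
    have heq : 2 * k + 1 + 2 = 2 * k + 3 := by omega
    rw [heq] at h
    exact h
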